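/- Let a b-specification be given whose induced geometric tree is regular. Then: (a) if v and w are words with σ(v) = σ(w), j, j', j'' ∈ B, and 𝓘 is a facet index set with 𝓘 ∈ indexFacets(Q(v·j)), such that v·j' is a geometric neighbor of v·j at 𝓘 and w·j'' is a geometric neighbor of w·j at 𝓘, then j' = j''; (b) if v, v', w, w' are words and 𝓙₁, 𝓙₂ are facet index sets with σ(v) = σ(w), v' a geometric neighbor of v at 𝓙₁, w' a geometric neighbor of w at 𝓙₂, and j, j', j'' ∈ B are such that v'·j' is a geometric neighbor of v·j at 𝓘 and w'·j'' is a geometric neighbor of w·j at 𝓘, then 𝓙₁ = 𝓙₂, and if additionally σ(v') = σ(w') then j' = j''. (In other words, the lookup functions N, F^p and Ω defined from the geometry are well-defined.) -/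

import Mathlib

open Matrix BigOperators

/-- A `b`-specification in dimension `d`: states `S` with root state `sr` and
child-state map `Sc` (every state reachable from `sr`), vertex counts `n s ≥ 1`,
a root point matrix `Qr`, and transition matrices `M s j` (all column sums 1). -/
structure BSpec (d b : ℕ) (S : Type) where
  sr : S
  Sc : S → Fin b → S
  reach : ∀ s : S, ∃ w : List (Fin b), w.foldl Sc sr = s
  n : S → ℕ
  n_pos : ∀ s : S, 1 ≤ n s
  Qr : Matrix (Fin d) (Fin (n sr)) ℝ
  M : (s : S) → (j : Fin b) → Matrix (Fin (n s)) (Fin (n (Sc s j))) ℝ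
  M_trans : ∀ (s : S) (j : Fin b) (col : Fin (n (Sc s j))), ∑ i, M s j i col = 1

namespace BSpec

variable {d b : ℕ} {S : Type}

/-- The state `σ(w)` of the tree node given by the word `w` (digits read left to right,
`σ(ε) = s_r`, `σ(w·j) = S^c(σ(w), j)`). -/
def st (sp : BSpec d b S) (w : List (Fin b)) : S :=
  w.foldl sp.Sc sp.sr

/-- Helper for the point matrices: fold the transition matrices along a word. -/
def Qfrom (sp : BSpec d b S) :
    (s : S) → (w : List (Fin b)) → Matrix (Fin d) (Fin (sp.n s)) ℝ →
      Matrix (Fin d) (Fin (sp.n (w.foldl sp.Sc s))) ℝ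
  | _, [], Q => Q
  | s, j :: w, Q => sp.Qfrom (sp.Sc s j) w (Q * sp.M s j)

/-- The point matrix `Q(w)` of the tree node given by the word `w`
(`Q(ε) = Q^r`, `Q(w·j) = Q(w)·M^{σ(w),j}`). -/
def Qm (sp : BSpec d b S) (w : List (Fin b)) :
    Matrix (Fin d) (Fin (sp.n (sp.st w))) ℝ :=
  sp.Qfrom sp.sr w sp.Qr

end BSpec

/-- The `i`-th column of a matrix, as a point of `ℝ^d`. -/
def colFun {d m : ℕ} (Q : Matrix (Fin d) (Fin m) ℝ) (i : Fin m) : Fin d → ℝ :=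
  fun r => Q r i

/-- The convex hull of the columns of `Q`. -/
def convOf {d m : ℕ} (Q : Matrix (Fin d) (Fin m) ℝ) : Set (Fin d → ℝ) :=
  convexHull ℝ (Set.range (colFun Q))

/-- A face of a polytope `P`: the intersection of `P` with a supporting hyperplane. -/
def IsFace {d : ℕ} (P F : Set (Fin d → ℝ)) : Prop :=
  ∃ (c : Fin d → ℝ) (c₀ : ℝ), (∀ x ∈ P, c ⬝ᵥ x ≤ c₀) ∧ F = {x ∈ P | c ⬝ᵥ x = c₀}

open Classical in
/-- The dimension of a subset of `ℝ^d`: the dimension of its affine span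
(with the convention that the empty set has dimension `-1`). -/
noncomputable def setDim {d : ℕ} (s : Set (Fin d → ℝ)) : ℤ :=
  if s = ∅ then -1 else (Module.finrank ℝ (affineSpan ℝ s).direction : ℤ)

/-- A facet of a polytope `P`: a face of dimension `dim P - 1`. -/
def IsFacet {d : ℕ} (P F : Set (Fin d → ℝ)) : Prop :=
  IsFace P F ∧ setDim F = setDim P - 1

/-- The family of index sets (as subsets of `ℕ`) of facets of `conv(Q)`. -/
def idxFacets {d m : ℕ} (Q : Matrix (Fin d) (Fin m) ℝ) : Set (Set ℕ) :=
  {I | ∃ F : Set (Fin d → ℝ), IsFacet (convOf Q) F ∧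
    I = {i : ℕ | ∃ h : i < m, colFun Q ⟨i, h⟩ ∈ F}}

/-- The convex hull of the columns of `Q` whose index lies in `I`. -/
def facetOfIdx {d m : ℕ} (Q : Matrix (Fin d) (Fin m) ℝ) (I : Set ℕ) :
    Set (Fin d → ℝ) :=
  convexHull ℝ {x | ∃ i : Fin m, (i : ℕ) ∈ I ∧ x = colFun Q i}

/-- `τ : Q ∼ Q'`: the matrices have the same number of columns and the invertible
affine map `τ` carries the `i`-th column of `Q` to the `i`-th column of `Q'`. -/
def SimBy {d m m' : ℕ} (τ : (Fin d → ℝ) ≃ᵃ[ℝ] (Fin d → ℝ))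
    (Q : Matrix (Fin d) (Fin m) ℝ) (Q' : Matrix (Fin d) (Fin m') ℝ) : Prop :=
  m = m' ∧ ∀ (i : ℕ) (h : i < m) (h' : i < m'),
    colFun Q' ⟨i, h'⟩ = τ (colFun Q ⟨i, h⟩)

/-- `Q ∼ Q'`: some invertible affine map carries the columns of `Q` to those of `Q'`. -/
def Sim {d m m' : ℕ} (Q : Matrix (Fin d) (Fin m) ℝ)
    (Q' : Matrix (Fin d) (Fin m') ℝ) : Prop :=
  ∃ τ : (Fin d → ℝ) ≃ᵃ[ℝ] (Fin d → ℝ), SimBy τ Q Q'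

namespace BSpec

variable {d b : ℕ} {S : Type}

/-- `v'` is a geometric neighbor of `v` at the facet index set `I`:
`v` and `v'` are words of equal positive length, `I ∈ indexFacets(Q(v))`,
`conv(Q(v)) ∩ conv(Q(v'))` equals the facet of `conv(Q(v))` spanned by the
columns indexed by `I`, and this intersection is also a facet of `conv(Q(v'))`. -/
def GeomNbr (sp : BSpec d b S) (v v' : List (Fin b)) (I : Set ℕ) : Prop :=
  v.length = v'.length ∧ v ≠ [] ∧
  I ∈ idxFacets (sp.Qm v) ∧
  convOf (sp.Qm v) ∩ convOf (sp.Qm v') = facetOfIdx (sp.Qm v) I ∧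
  IsFacet (convOf (sp.Qm v')) (convOf (sp.Qm v) ∩ convOf (sp.Qm v'))

/-- Pre-regularity: (P1) equal states give affinely equivalent point matrices;
(P2) every node polytope is full-dimensional. -/
def PreRegular (sp : BSpec d b S) : Prop :=
  (∀ w w' : List (Fin b), sp.st w = sp.st w' → Sim (sp.Qm w) (sp.Qm w')) ∧
  (∀ w : List (Fin b), setDim (convOf (sp.Qm w)) = (d : ℤ))

/-- Regularity: pre-regularity together with (R1), (R2) and (R3). -/
def Regular (sp : BSpec d b S) : Prop :=
  sp.PreRegular ∧
  -- (R1)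
  (∀ (v₁ v₂ v₁' v₂' : List (Fin b)) (I : Set ℕ),
    sp.GeomNbr v₁ v₂ I → sp.GeomNbr v₁' v₂' I →
    sp.st v₁ = sp.st v₁' → sp.st v₂ = sp.st v₂' →
    ∃ τ : (Fin d → ℝ) ≃ᵃ[ℝ] (Fin d → ℝ),
      SimBy τ (sp.Qm v₁) (sp.Qm v₁') ∧ SimBy τ (sp.Qm v₂) (sp.Qm v₂')) ∧
  -- (R2)
  (∀ (w : List (Fin b)) (j : Fin b),
    convOf (sp.Qm (w ++ [j])) ⊆ convOf (sp.Qm w)) ∧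
  -- (R3)
  (∀ v v' : List (Fin b), v.length = v'.length →
    (setDim (convOf (sp.Qm v) ∩ convOf (sp.Qm v')) = (d : ℤ) → v = v') ∧
    (setDim (convOf (sp.Qm v) ∩ convOf (sp.Qm v')) = (d : ℤ) - 1 →
      ∃ I ∈ idxFacets (sp.Qm v), sp.GeomNbr v v' I))

end BSpec

section Aux

variable {d : ℕ}

def dpLin (c : Fin d → ℝ) : (Fin d → ℝ) →ₗ[ℝ] ℝ where
  toFun x := c ⬝ᵥ x
  map_add' x y := by simp [dotProduct_add]
  map_smul' r x := by simp

@[simp] theorem dpLin_apply (c x : Fin d → ℝ) : dpLin c x = c ⬝ᵥ x := rfl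

theorem convex_dp_eq (c : Fin d → ℝ) (c₀ : ℝ) : Convex ℝ {x : Fin d → ℝ | c ⬝ᵥ x = c₀} := by
  intro x hx y hy a bb ha hb hab
  simp only [Set.mem_setOf_eq] at hx hy ⊢
  have : c ⬝ᵥ (a • x + bb • y) = a * (c ⬝ᵥ x) + bb * (c ⬝ᵥ y) := by
    simp [dotProduct_add]
  rw [this, hx, hy]
  linear_combination c₀ * hab

theorem finrank_pi_real : Module.finrank ℝ (Fin d → ℝ) = d := Module.finrank_fin_fun ℝ

theorem finrank_ker_dpLin {c : Fin d → ℝ} (hc : c ≠ 0) :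
    Module.finrank ℝ (LinearMap.ker (dpLin c)) = d - 1 := by
  have hcc : c ⬝ᵥ c ≠ 0 := by
    rw [Ne, dotProduct_self_eq_zero]; exact hc
  have hrange : LinearMap.range (dpLin c) = ⊤ := by
    rw [LinearMap.range_eq_top]
    intro r
    refine ⟨(r / (c ⬝ᵥ c)) • c, ?_⟩
    simp only [dpLin_apply, dotProduct_smul, smul_eq_mul]
    field_simp
  have hrk := LinearMap.finrank_range_add_finrank_ker (dpLin c)
  rw [hrange, finrank_top, finrank_pi_real, Module.finrank_self] at hrk
  omega

theorem setDim_of_nonempty {s : Set (Fin d → ℝ)} (hs : s.Nonempty) :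
    setDim s = (Module.finrank ℝ (affineSpan ℝ s).direction : ℤ) := by
  rw [setDim, if_neg (Set.nonempty_iff_ne_empty.mp hs)]

theorem nonempty_of_setDim {s : Set (Fin d → ℝ)} {k : ℤ} (h : setDim s = k) (hk : 0 ≤ k) :
    s.Nonempty := by
  by_contra hne
  rw [Set.not_nonempty_iff_eq_empty] at hne
  rw [setDim, if_pos hne] at h
  omega

theorem finrank_of_setDim {s : Set (Fin d → ℝ)} {k : ℕ} (h : setDim s = (k : ℤ)) (hs : s.Nonempty) :
    Module.finrank ℝ (affineSpan ℝ s).direction = k := by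
  rw [setDim_of_nonempty hs] at h
  exact_mod_cast h

theorem direction_le_ker {s : Set (Fin d → ℝ)} {c : Fin d → ℝ} {c₀ : ℝ}
    (hs : ∀ x ∈ s, c ⬝ᵥ x = c₀) :
    (affineSpan ℝ s).direction ≤ LinearMap.ker (dpLin c) := by
  rcases s.eq_empty_or_nonempty with rfl | ⟨x₀, hx₀⟩
  · simp
  · have hsub : s ⊆ (AffineSubspace.mk' x₀ (LinearMap.ker (dpLin c)) : Set (Fin d → ℝ)) := by
      intro x hx
      refine AffineSubspace.mem_mk'.mpr ?_
      simp [LinearMap.mem_ker, vsub_eq_sub, dotProduct_sub, hs x hx, hs x₀ hx₀]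
    have hle := affineSpan_le.mpr hsub
    have := AffineSubspace.direction_le hle
    rwa [AffineSubspace.direction_mk'] at this
end Aux

section Aux2
variable {d : ℕ}

theorem mem_hull_move {Y : Set (Fin d → ℝ)} (hfin : Y.Finite) (hne : Y.Nonempty) :
    ∃ x₀ ∈ convexHull ℝ Y, ∀ h ∈ vectorSpan ℝ Y, ∃ δ : ℝ, 0 < δ ∧
      ∀ r : ℝ, 0 ≤ r → r ≤ δ → x₀ + r • h ∈ convexHull ℝ Y := by
  classical
  set Yf := hfin.toFinset with hYf
  have hYfc : (Yf : Set (Fin d → ℝ)) = Y := hfin.coe_toFinset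
  have hYfne : Yf.Nonempty := by
    rw [← Finset.coe_nonempty, hYfc]; exact hne
  have hNpos : (0 : ℝ) < (Yf.card : ℝ) := by
    exact_mod_cast Finset.card_pos.mpr hYfne
  set N : ℝ := (Yf.card : ℝ) with hN
  have hsum0 : ∑ _y ∈ Yf, N⁻¹ = 1 := by
    rw [Finset.sum_const, nsmul_eq_mul]
    field_simp
    exact hN.symm
  set x₀ : Fin d → ℝ := Yf.centerMass (fun _ => N⁻¹) id with hx₀
  have hx₀mem : x₀ ∈ convexHull ℝ Y :=
    Yf.centerMass_mem_convexHull (fun i _ => by positivity) (by rw [hsum0]; norm_num)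
      (fun i hi => by rw [← hYfc]; exact hi)
  refine ⟨x₀, hx₀mem, ?_⟩
  intro h hh
  obtain ⟨y₀, hy₀⟩ := hYfne
  have hy₀Y : y₀ ∈ Y := by rw [← hYfc]; exact hy₀
  rw [vectorSpan_eq_span_vsub_set_right ℝ hy₀Y] at hh
  have himg : (· -ᵥ y₀) '' Y = (Yf.image (fun y => y - y₀) : Set (Fin d → ℝ)) := by
    rw [Finset.coe_image, hYfc]
    rfl
  rw [himg] at hh
  obtain ⟨g, -, hg⟩ := Submodule.mem_span_finset.mp hh
  have hinj : ∀ x ∈ Yf, ∀ y ∈ Yf, x - y₀ = y - y₀ → x = y := by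
    intro x _ y _ hxy
    have := sub_left_injective hxy
    exact this
  rw [Finset.sum_image hinj] at hg
  set a : (Fin d → ℝ) → ℝ := fun y => g (y - y₀) with ha
  set A : ℝ := ∑ y ∈ Yf, a y with hA
  set Sa : ℝ := ∑ y ∈ Yf, |a y| with hSa
  have hSa0 : 0 ≤ Sa := Finset.sum_nonneg fun y _ => abs_nonneg _
  set δ : ℝ := N⁻¹ / (Sa + |A| + 1) with hδ
  have hδpos : 0 < δ := by positivity
  refine ⟨δ, hδpos, ?_⟩
  intro r hr0 hrδ
  set w : (Fin d → ℝ) → ℝ := fun y => N⁻¹ + r * a y - (if y = y₀ then r * A else 0) with hw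
  have hwsum : ∑ y ∈ Yf, w y = 1 := by
    rw [hw]
    rw [Finset.sum_sub_distrib, Finset.sum_add_distrib, ← Finset.mul_sum, ← hA,
      Finset.sum_ite_eq' Yf y₀ (fun _ => r * A), if_pos hy₀, hsum0]
    ring
  have hkey : δ * (Sa + |A|) ≤ N⁻¹ := by
    rw [hδ, div_mul_eq_mul_div]
    rw [div_le_iff₀ (by positivity)]
    nlinarith [inv_pos.mpr hNpos]
  have hwnn : ∀ y ∈ Yf, 0 ≤ w y := by
    intro y hy
    have habs : |a y| ≤ Sa := Finset.single_le_sum (fun z _ => abs_nonneg (a z)) hy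
    have h1 : r * a y ≥ -(r * |a y|) := by
      have := neg_abs_le (a y)
      nlinarith
    have h2 : (if y = y₀ then r * A else 0) ≤ r * |A| := by
      split
      · nlinarith [le_abs_self A]
      · positivity
    have h3 : r * (|a y| + |A|) ≤ δ * (Sa + |A|) := by
      apply mul_le_mul hrδ (by nlinarith) (by positivity) hδpos.le
    simp only [hw]
    nlinarith
  have hcm : Yf.centerMass w id = x₀ + r • h := by
    rw [Finset.centerMass_eq_of_sum_1 _ _ hwsum, hx₀,
      Finset.centerMass_eq_of_sum_1 _ _ hsum0]
    have hexp : ∀ y ∈ Yf, w y • (id y : Fin d → ℝ) =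
        N⁻¹ • y + (r * a y) • y - (if y = y₀ then (r * A) • y else 0) := by
      intro y _
      simp only [hw, id]
      split <;> simp [sub_smul, add_smul]
    rw [Finset.sum_congr rfl hexp]
    rw [Finset.sum_sub_distrib, Finset.sum_add_distrib,
      Finset.sum_ite_eq' Yf y₀ (fun y => (r * A) • y), if_pos hy₀]
    have hid : ∀ y ∈ Yf, (N⁻¹ • y : Fin d → ℝ) = N⁻¹ • id y := by intro y _; rfl
    rw [Finset.sum_congr rfl hid]
    have hrh : r • h = ∑ y ∈ Yf, (r * a y) • y - (r * A) • y₀ := by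
      rw [← hg, Finset.smul_sum]
      have h2 : (r * A) • y₀ = ∑ y ∈ Yf, (r * a y) • y₀ := by
        rw [hA, Finset.mul_sum, Finset.sum_smul]
      rw [h2, ← Finset.sum_sub_distrib]
      apply Finset.sum_congr rfl
      intro y _
      rw [smul_smul, smul_sub]
    rw [hrh]
    abel
  rw [← hcm]
  exact Yf.centerMass_mem_convexHull hwnn (by rw [hwsum]; norm_num)
    (fun i hi => by rw [← hYfc]; exact hi)
end Aux2

section Aux3
variable {d : ℕ}

theorem exists_lt_of_full {C : Set (Fin d → ℝ)} {c : Fin d → ℝ} {c₀ : ℝ} (hd : 1 ≤ d)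
    (hC : ∀ x ∈ C, c ⬝ᵥ x ≤ c₀) {x₀ : Fin d → ℝ} (hx₀ : x₀ ∈ C) (hx₀c : c ⬝ᵥ x₀ = c₀)
    (hc : c ≠ 0) (hdim : setDim C = (d : ℤ)) : ∃ p ∈ C, c ⬝ᵥ p < c₀ := by
  by_contra hcon
  push_neg at hcon
  have hall : ∀ x ∈ C, c ⬝ᵥ x = c₀ := fun x hx => le_antisymm (hC x hx) (hcon x hx)
  have hdir : (affineSpan ℝ C).direction ≤ LinearMap.ker (dpLin c) := direction_le_ker hall
  have h1 : Module.finrank ℝ (affineSpan ℝ C).direction ≤ d - 1 := by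
    rw [← finrank_ker_dpLin hc]
    exact Submodule.finrank_mono hdir
  have h2 : Module.finrank ℝ (affineSpan ℝ C).direction = d :=
    finrank_of_setDim hdim ⟨x₀, hx₀⟩
  omega

theorem setDim_inter_full (hd : 1 ≤ d) {c : Fin d → ℝ} (hc : c ≠ 0) {c₀ : ℝ}
    {Y : Set (Fin d → ℝ)} (hYfin : Y.Finite) {C₁ C₂ : Set (Fin d → ℝ)}
    (h₁ : Convex ℝ C₁) (h₂ : Convex ℝ C₂)
    (hF₁ : convexHull ℝ Y ⊆ C₁) (hF₂ : convexHull ℝ Y ⊆ C₂)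
    (hYH : ∀ y ∈ Y, c ⬝ᵥ y = c₀)
    (hC₁ : ∀ x ∈ C₁, c ⬝ᵥ x ≤ c₀) (hC₂ : ∀ x ∈ C₂, c ⬝ᵥ x ≤ c₀)
    (hdimF : setDim (convexHull ℝ Y) = (d : ℤ) - 1)
    (hdim₁ : setDim C₁ = (d : ℤ)) (hdim₂ : setDim C₂ = (d : ℤ)) :
    setDim (C₁ ∩ C₂) = (d : ℤ) := by
  set F := convexHull ℝ Y with hF
  have hFd : setDim F = ((d - 1 : ℕ) : ℤ) := by
    rw [hdimF]; omega
  have hFne : F.Nonempty := nonempty_of_setDim hFd (by omega)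
  have hYne : Y.Nonempty := by
    by_contra hcc
    rw [Set.not_nonempty_iff_eq_empty] at hcc
    rw [hF, hcc, convexHull_empty] at hFne
    exact Set.not_nonempty_empty hFne
  have hFhyp : ∀ x ∈ F, c ⬝ᵥ x = c₀ := fun x hx =>
    convexHull_min (fun y hy => hYH y hy) (convex_dp_eq c c₀) hx
  -- the direction of F equals the kernel of the functional
  have hWfr : Module.finrank ℝ (vectorSpan ℝ Y) = d - 1 := by
    have := finrank_of_setDim hFd hFne
    rwa [hF, affineSpan_convexHull, direction_affineSpan] at this
  have hWle : vectorSpan ℝ Y ≤ LinearMap.ker (dpLin c) := by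
    have := direction_le_ker hYH
    rwa [direction_affineSpan] at this
  have hWker : vectorSpan ℝ Y = LinearMap.ker (dpLin c) :=
    Submodule.eq_of_le_of_finrank_eq hWle (by rw [hWfr, finrank_ker_dpLin hc])
  -- a centroid point that can be moved in all directions of F
  obtain ⟨x₀, hx₀F, hmove⟩ := mem_hull_move hYfin hYne
  have hx₀c : c ⬝ᵥ x₀ = c₀ := hFhyp x₀ hx₀F
  -- strictly interior points of C₁ and C₂
  obtain ⟨p₁, hp₁C, hp₁⟩ := exists_lt_of_full hd hC₁ (hF₁ hx₀F) hx₀c hc hdim₁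
  obtain ⟨p₂, hp₂C, hp₂⟩ := exists_lt_of_full hd hC₂ (hF₂ hx₀F) hx₀c hc hdim₂
  set α : ℝ := c₀ - c ⬝ᵥ p₁ with hα
  set β : ℝ := c₀ - c ⬝ᵥ p₂ with hβ
  have hαpos : 0 < α := by rw [hα]; linarith
  have hβpos : 0 < β := by rw [hβ]; linarith
  set s : ℝ := β / α with hs
  have hspos : 0 < s := div_pos hβpos hαpos
  set h : Fin d → ℝ := (p₂ - x₀) - s • (p₁ - x₀) with hh
  have hhW : h ∈ vectorSpan ℝ Y := by
    rw [hWker, LinearMap.mem_ker, hh]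
    have : dpLin c ((p₂ - x₀) - s • (p₁ - x₀)) =
        (c ⬝ᵥ p₂ - c ⬝ᵥ x₀) - s * (c ⬝ᵥ p₁ - c ⬝ᵥ x₀) := by
      rw [map_sub, _root_.map_smul, map_sub, map_sub]
      simp [smul_eq_mul]
    rw [this, hx₀c, hs, hβ, hα]
    have hα0 : c₀ - c ⬝ᵥ p₁ ≠ 0 := ne_of_gt (by linarith)
    field_simp
    ring
  obtain ⟨δ₀, hδ₀pos, hδ₀⟩ := hmove h hhW
  set t : ℝ := min (δ₀ / 2) (1 / (2 * s + 2)) with ht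
  have htpos : 0 < t := by
    apply lt_min (by linarith) (by positivity)
  have hts : t * s < 1 / 2 := by
    have h1 : t ≤ 1 / (2 * s + 2) := min_le_right _ _
    have h2 : t * s ≤ (1 / (2 * s + 2)) * s := mul_le_mul_of_nonneg_right h1 hspos.le
    have h3 : (1 / (2 * s + 2)) * s < 1 / 2 := by
      rw [div_mul_eq_mul_div, div_lt_iff₀ (by positivity)]
      nlinarith
    linarith
  have h1ts : (0:ℝ) < 1 - t * s := by linarith
  set r : ℝ := t / (1 - t * s) with hr
  have hrt : (1 - t * s) * r = t := by
    rw [hr]; field_simp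
  have hr0 : 0 ≤ r := by positivity
  have hrδ : r ≤ δ₀ := by
    have h2t : t ≤ δ₀ / 2 := min_le_left _ _
    nlinarith
  set y : Fin d → ℝ := x₀ + r • h with hy
  have hyF : y ∈ F := hδ₀ r hr0 hrδ
  set z : Fin d → ℝ := x₀ + t • (p₂ - x₀) with hz
  have hz₂ : z ∈ C₂ := by
    have ht1 : t ≤ 1 / 2 := by
      have h5 := min_le_right (δ₀/2) (1 / (2 * s + 2))
      have h4 : 1 / (2 * s + 2) ≤ 1 / 2 := by
        rw [div_le_div_iff₀ (by positivity) (by norm_num)]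
        nlinarith
      linarith
    have hcomb := h₂ (hF₂ hx₀F) hp₂C (by linarith : (0:ℝ) ≤ 1 - t) htpos.le (by ring)
    have : (1 - t) • x₀ + t • p₂ = z := by
      rw [hz]; module
    rwa [this] at hcomb
  have hz₁ : z ∈ C₁ := by
    have hcomb := h₁ (hF₁ hyF) hp₁C h1ts.le (by positivity : (0:ℝ) ≤ t * s) (by ring)
    have hexp : (1 - t * s) • y = (1 - t * s) • x₀ + t • h := by
      rw [hy, smul_add, smul_smul, hrt]
    have : (1 - t * s) • y + (t * s) • p₁ = z := by
      rw [hexp, hh, hz]; module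
    rwa [this] at hcomb
  -- now compute the dimension
  have hczx : dpLin c (z - x₀) = -(t * β) := by
    have : z - x₀ = t • (p₂ - x₀) := by rw [hz]; abel
    rw [this, _root_.map_smul, map_sub]
    simp only [smul_eq_mul, dpLin_apply]
    rw [hx₀c, hβ]
    ring
  have hx₀CC : x₀ ∈ C₁ ∩ C₂ := ⟨hF₁ hx₀F, hF₂ hx₀F⟩
  have hzCC : z ∈ C₁ ∩ C₂ := ⟨hz₁, hz₂⟩
  set D := (affineSpan ℝ (C₁ ∩ C₂)).direction with hD
  have hWD : vectorSpan ℝ Y ≤ D := by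
    have hsub : F ⊆ C₁ ∩ C₂ := Set.subset_inter hF₁ hF₂
    have h5 := AffineSubspace.direction_le (affineSpan_mono ℝ hsub)
    rwa [hF, affineSpan_convexHull, direction_affineSpan] at h5
  have hzD : z - x₀ ∈ D := by
    have := AffineSubspace.vsub_mem_direction (mem_affineSpan ℝ hzCC) (mem_affineSpan ℝ hx₀CC)
    rwa [vsub_eq_sub] at this
  have hznW : z - x₀ ∉ vectorSpan ℝ Y := by
    rw [hWker, LinearMap.mem_ker, hczx]
    intro hc0
    nlinarith [htpos, hβpos]
  have hlt : vectorSpan ℝ Y < D :=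
    lt_of_le_of_ne hWD (fun he => hznW (he ▸ hzD))
  have hfr1 : Module.finrank ℝ (vectorSpan ℝ Y) < Module.finrank ℝ D :=
    Submodule.finrank_lt_finrank_of_lt hlt
  have hfr2 : Module.finrank ℝ D ≤ d := by
    have := Submodule.finrank_le D
    rwa [finrank_pi_real] at this
  have hfrD : Module.finrank ℝ D = d := by omega
  rw [setDim_of_nonempty ⟨x₀, hx₀CC⟩, ← hD, hfrD]
end Aux3

section Transport
variable {d m m' : ℕ} {τ : (Fin d → ℝ) ≃ᵃ[ℝ] (Fin d → ℝ)}

theorem image_convexHull_affEquiv (τ : (Fin d → ℝ) ≃ᵃ[ℝ] (Fin d → ℝ)) (s : Set (Fin d → ℝ)) :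
    ⇑τ '' convexHull ℝ s = convexHull ℝ (⇑τ '' s) := by
  have := AffineMap.image_convexHull (τ : (Fin d → ℝ) →ᵃ[ℝ] (Fin d → ℝ)) s
  simpa using this

theorem SimBy.convOf_eq {Q : Matrix (Fin d) (Fin m) ℝ} {Q' : Matrix (Fin d) (Fin m') ℝ}
    (h : SimBy τ Q Q') : convOf Q' = ⇑τ '' convOf Q := by
  obtain ⟨rfl, hcol⟩ := h
  have hr : Set.range (colFun Q') = ⇑τ '' Set.range (colFun Q) := by
    ext x
    constructor
    · rintro ⟨i, rfl⟩
      exact ⟨colFun Q i, ⟨i, rfl⟩, (by simpa using hcol i i.2 i.2 : colFun Q' i = τ (colFun Q i)).symm⟩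
    · rintro ⟨y, ⟨i, rfl⟩, rfl⟩
      exact ⟨i, by simpa using hcol i i.2 i.2⟩
  rw [convOf, convOf, hr, image_convexHull_affEquiv]

theorem SimBy.facetOfIdx_eq {Q : Matrix (Fin d) (Fin m) ℝ} {Q' : Matrix (Fin d) (Fin m') ℝ}
    (h : SimBy τ Q Q') (I : Set ℕ) : facetOfIdx Q' I = ⇑τ '' facetOfIdx Q I := by
  obtain ⟨rfl, hcol⟩ := h
  rw [facetOfIdx, facetOfIdx, image_convexHull_affEquiv]
  congr 1
  ext x
  constructor
  · rintro ⟨i, hiI, rfl⟩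
    exact ⟨colFun Q i, ⟨i, hiI, rfl⟩, (by simpa using hcol i i.2 i.2 : colFun Q' i = τ (colFun Q i)).symm⟩
  · rintro ⟨y, ⟨i, hiI, rfl⟩, rfl⟩
    exact ⟨i, hiI, (by simpa using hcol i i.2 i.2 : colFun Q' i = τ (colFun Q i)).symm⟩

theorem IsFace.image {P F : Set (Fin d → ℝ)} (τ : (Fin d → ℝ) ≃ᵃ[ℝ] (Fin d → ℝ))
    (h : IsFace P F) : IsFace (⇑τ '' P) (⇑τ '' F) := by
  obtain ⟨c, c₀, hle, hFe⟩ := h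
  classical
  set c' : Fin d → ℝ := fun i => c ⬝ᵥ (τ.symm.linear ((fun j => if i = j then (1:ℝ) else 0))) with hc'
  set k : ℝ := c ⬝ᵥ (τ.symm 0) with hk
  have key : ∀ y : Fin d → ℝ, c' ⬝ᵥ y = c ⬝ᵥ (τ.symm y) - k := by
    intro y
    have hdec : τ.symm y = τ.symm.linear y + τ.symm 0 := by
      have h0 := AffineMap.decomp (τ.symm : (Fin d → ℝ) →ᵃ[ℝ] (Fin d → ℝ))
      have := congrFun h0 y
      simpa using this
    have hlin : τ.symm.linear y = ∑ i, y i • τ.symm.linear ((fun j => if i = j then (1:ℝ) else 0)) := by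
      exact LinearMap.pi_apply_eq_sum_univ (τ.symm.linear : (Fin d → ℝ) →ₗ[ℝ] (Fin d → ℝ)) y
    rw [hdec, dotProduct_add, hlin, hk]
    have : dpLin c (∑ i, y i • τ.symm.linear ((fun j => if i = j then (1:ℝ) else 0))) =
        ∑ i, y i * (c ⬝ᵥ τ.symm.linear ((fun j => if i = j then (1:ℝ) else 0))) := by
      rw [map_sum]
      apply Finset.sum_congr rfl
      intro i _
      rw [_root_.map_smul]
      simp [smul_eq_mul]
    rw [← dpLin_apply c, this]
    rw [dotProduct]
    ring_nf
    apply Finset.sum_congr rfl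
    intro i _
    rw [hc']
    ring
  refine ⟨c', c₀ - k, ?_, ?_⟩
  · rintro y ⟨x, hx, rfl⟩
    rw [key, τ.symm_apply_apply]
    have := hle x hx
    linarith
  · ext y
    constructor
    · rintro ⟨x, hxF, rfl⟩
      have hx := hFe ▸ hxF
      obtain ⟨hxP, hxc⟩ := hx
      refine ⟨⟨x, hxP, rfl⟩, ?_⟩
      rw [key, τ.symm_apply_apply, hxc]
    · rintro ⟨⟨x, hxP, rfl⟩, heq⟩
      rw [key, τ.symm_apply_apply] at heq
      have hxc : c ⬝ᵥ x = c₀ := by linarith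
      exact ⟨x, hFe ▸ ⟨hxP, hxc⟩, rfl⟩

theorem setDim_image (τ : (Fin d → ℝ) ≃ᵃ[ℝ] (Fin d → ℝ)) (s : Set (Fin d → ℝ)) :
    setDim (⇑τ '' s) = setDim s := by
  rcases s.eq_empty_or_nonempty with rfl | hs
  · simp
  · rw [setDim_of_nonempty hs, setDim_of_nonempty (hs.image _)]
    congr 1
    have h1 : affineSpan ℝ (⇑τ '' s) = (affineSpan ℝ s).map (τ : (Fin d → ℝ) →ᵃ[ℝ] (Fin d → ℝ)) := by
      rw [AffineSubspace.map_span]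
      simp
    rw [h1, AffineSubspace.map_direction]
    have h2 : (τ : (Fin d → ℝ) →ᵃ[ℝ] (Fin d → ℝ)).linear = (τ.linear : (Fin d → ℝ) →ₗ[ℝ] (Fin d → ℝ)) := by
      simp
    rw [h2]
    exact LinearEquiv.finrank_map_eq τ.linear _

theorem IsFacet.image {P F : Set (Fin d → ℝ)} (τ : (Fin d → ℝ) ≃ᵃ[ℝ] (Fin d → ℝ))
    (h : IsFacet P F) : IsFacet (⇑τ '' P) (⇑τ '' F) :=
  ⟨h.1.image τ, by rw [setDim_image, setDim_image]; exact h.2⟩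

theorem SimBy.idxFacets_mem {Q : Matrix (Fin d) (Fin m) ℝ} {Q' : Matrix (Fin d) (Fin m') ℝ}
    (hs : SimBy τ Q Q') {I : Set ℕ} (hI : I ∈ idxFacets Q) : I ∈ idxFacets Q' := by
  have hco := hs.convOf_eq
  obtain ⟨rfl, hcol⟩ := hs
  obtain ⟨F, hF, hIdef⟩ := hI
  refine ⟨⇑τ '' F, ?_, ?_⟩
  · rw [hco]
    exact hF.image τ
  · rw [hIdef]
    ext i
    simp only [Set.mem_setOf_eq]
    constructor
    · rintro ⟨h, hmem⟩
      refine ⟨h, ?_⟩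
      rw [show colFun Q' ⟨i, h⟩ = τ (colFun Q ⟨i, h⟩) from hcol i h h]
      exact Set.mem_image_of_mem _ hmem
    · rintro ⟨h, hmem⟩
      refine ⟨h, ?_⟩
      rw [show colFun Q' ⟨i, h⟩ = τ (colFun Q ⟨i, h⟩) from hcol i h h] at hmem
      exact (Function.Injective.mem_set_image τ.injective).mp hmem
end Transport

section Faces
variable {d : ℕ}

theorem IsFace.convex {P F : Set (Fin d → ℝ)} (hP : Convex ℝ P) (h : IsFace P F) :
    Convex ℝ F := by
  obtain ⟨c, c₀, _, rfl⟩ := h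
  have : {x ∈ P | c ⬝ᵥ x = c₀} = P ∩ {x | c ⬝ᵥ x = c₀} := rfl
  rw [this]
  exact hP.inter (convex_dp_eq c c₀)

/-- A face of a polytope cut out by a nonzero functional, given its dimension facts. -/
theorem face_c_ne_zero {P F : Set (Fin d → ℝ)} {c : Fin d → ℝ} {c₀ : ℝ} (hd : 2 ≤ d)
    (hFe : F = {x ∈ P | c ⬝ᵥ x = c₀}) (hdP : setDim P = (d : ℤ))
    (hdF : setDim F = (d : ℤ) - 1) : c ≠ 0 := by
  intro hc0
  subst hc0
  by_cases hc₀ : c₀ = 0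
  · subst hc₀
    have : F = P := by
      rw [hFe]; ext x; simp [zero_dotProduct]
    rw [this, hdP] at hdF
    omega
  · have : F = ∅ := by
      rw [hFe]; ext x; simp [zero_dotProduct]
      intro _; exact fun h => hc₀ h.symm
    rw [this] at hdF
    rw [setDim, if_pos rfl] at hdF
    omega

theorem facet_unique (hd : 2 ≤ d) {P G₁ G₂ F : Set (Fin d → ℝ)}
    (hG₁ : IsFacet P G₁) (hG₂ : IsFacet P G₂) (hP : setDim P = (d : ℤ))
    (hF₁ : F ⊆ G₁) (hF₂ : F ⊆ G₂) (hdF : setDim F = (d : ℤ) - 1) : G₁ = G₂ := by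
  obtain ⟨⟨c₁, e₁, hle₁, hGe₁⟩, hdim₁⟩ := hG₁
  obtain ⟨⟨c₂, e₂, hle₂, hGe₂⟩, hdim₂⟩ := hG₂
  rw [hP] at hdim₁ hdim₂
  have hc₁ : c₁ ≠ 0 := face_c_ne_zero hd hGe₁ hP hdim₁
  have hc₂ : c₂ ≠ 0 := face_c_ne_zero hd hGe₂ hP hdim₂
  have hFd' : setDim F = ((d - 1 : ℕ) : ℤ) := by rw [hdF]; omega
  have hFne : F.Nonempty := nonempty_of_setDim hFd' (by omega)
  obtain ⟨x₀, hx₀F⟩ := hFne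
  have hfr : Module.finrank ℝ (affineSpan ℝ F).direction = d - 1 :=
    finrank_of_setDim hFd' ⟨x₀, hx₀F⟩
  have hhyp₁ : ∀ x ∈ F, c₁ ⬝ᵥ x = e₁ := fun x hx => (hGe₁ ▸ hF₁ hx).2
  have hhyp₂ : ∀ x ∈ F, c₂ ⬝ᵥ x = e₂ := fun x hx => (hGe₂ ▸ hF₂ hx).2
  have hker₁ : (affineSpan ℝ F).direction = LinearMap.ker (dpLin c₁) :=
    Submodule.eq_of_le_of_finrank_eq (direction_le_ker hhyp₁)
      (by rw [hfr, finrank_ker_dpLin hc₁])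
  have hker₂ : (affineSpan ℝ F).direction = LinearMap.ker (dpLin c₂) :=
    Submodule.eq_of_le_of_finrank_eq (direction_le_ker hhyp₂)
      (by rw [hfr, finrank_ker_dpLin hc₂])
  have hiff : ∀ x : Fin d → ℝ, c₁ ⬝ᵥ x = e₁ ↔ c₂ ⬝ᵥ x = e₂ := by
    intro x
    have h1 : (c₁ ⬝ᵥ x = e₁) ↔ (x - x₀ ∈ LinearMap.ker (dpLin c₁)) := by
      rw [LinearMap.mem_ker, map_sub, dpLin_apply, dpLin_apply, sub_eq_zero,
        hhyp₁ x₀ hx₀F]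
    have h2 : (c₂ ⬝ᵥ x = e₂) ↔ (x - x₀ ∈ LinearMap.ker (dpLin c₂)) := by
      rw [LinearMap.mem_ker, map_sub, dpLin_apply, dpLin_apply, sub_eq_zero,
        hhyp₂ x₀ hx₀F]
    rw [h1, h2, ← hker₁, ← hker₂]
  rw [hGe₁, hGe₂]
  ext x
  simp only [Set.mem_setOf_eq]
  exact and_congr_right fun _ => hiff x

theorem side_of_facet (hd : 2 ≤ d) {P C F Y : Set (Fin d → ℝ)}
    (hYfin : Y.Finite) (hFY : F = convexHull ℝ Y)
    {c : Fin d → ℝ} {c₀ : ℝ} (hc : c ≠ 0)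
    (hPconv : Convex ℝ P) (hCconv : Convex ℝ C)
    (hPle : ∀ x ∈ P, c ⬝ᵥ x ≤ c₀) (hFhyp : ∀ x ∈ F, c ⬝ᵥ x = c₀)
    (hPC : P ∩ C = F) (hfacet : IsFacet C F)
    (hsP : setDim P = (d : ℤ)) (hsC : setDim C = (d : ℤ)) (hsF : setDim F = (d : ℤ) - 1) :
    ∀ x ∈ C, c₀ ≤ c ⬝ᵥ x := by
  obtain ⟨⟨c', e', hCle, hFeq⟩, _⟩ := hfacet
  have hc' : c' ≠ 0 := face_c_ne_zero hd hFeq hsC hsF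
  have hFd' : setDim F = ((d - 1 : ℕ) : ℤ) := by rw [hsF]; omega
  have hFne : F.Nonempty := nonempty_of_setDim hFd' (by omega)
  obtain ⟨x₀, hx₀F⟩ := hFne
  have hfr : Module.finrank ℝ (affineSpan ℝ F).direction = d - 1 :=
    finrank_of_setDim hFd' ⟨x₀, hx₀F⟩
  have hhyp' : ∀ x ∈ F, c' ⬝ᵥ x = e' := fun x hx => (hFeq ▸ hx).2
  have hker : (affineSpan ℝ F).direction = LinearMap.ker (dpLin c) :=
    Submodule.eq_of_le_of_finrank_eq (direction_le_ker hFhyp)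
      (by rw [hfr, finrank_ker_dpLin hc])
  have hker' : (affineSpan ℝ F).direction = LinearMap.ker (dpLin c') :=
    Submodule.eq_of_le_of_finrank_eq (direction_le_ker hhyp')
      (by rw [hfr, finrank_ker_dpLin hc'])
  have hcc : c ⬝ᵥ c ≠ 0 := by rw [Ne, dotProduct_self_eq_zero]; exact hc
  set u : Fin d → ℝ := (c ⬝ᵥ c)⁻¹ • c with hu
  have hcu : c ⬝ᵥ u = 1 := by
    rw [hu, dotProduct_smul, smul_eq_mul]
    field_simp
  set lam : ℝ := c' ⬝ᵥ u with hlam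
  have key : ∀ x : Fin d → ℝ, c' ⬝ᵥ x = lam * (c ⬝ᵥ x) := by
    intro x
    have hmem : x - (c ⬝ᵥ x) • u ∈ LinearMap.ker (dpLin c) := by
      rw [LinearMap.mem_ker, map_sub, _root_.map_smul, dpLin_apply, dpLin_apply, hcu]
      simp
    rw [← hker, hker'] at hmem
    rw [LinearMap.mem_ker, map_sub, _root_.map_smul, dpLin_apply, dpLin_apply] at hmem
    simp only [smul_eq_mul] at hmem
    rw [← hlam] at hmem
    linarith [hmem]
  have hlam0 : lam ≠ 0 := by
    intro h0
    apply hc'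
    have hall : ∀ x, c' ⬝ᵥ x = 0 := fun x => by rw [key, h0, zero_mul]
    have := hall c'
    rwa [dotProduct_self_eq_zero] at this
  have he' : e' = lam * c₀ := by
    have h1 := hhyp' x₀ hx₀F
    have h2 := hFhyp x₀ hx₀F
    rw [key, h2] at h1
    linarith
  have hFP : F ⊆ P := by rw [← hPC]; exact Set.inter_subset_left
  have hFC : F ⊆ C := by rw [← hPC]; exact Set.inter_subset_right
  by_cases hlampos : 0 < lam
  · exfalso
    have hCle' : ∀ x ∈ C, c ⬝ᵥ x ≤ c₀ := by
      intro x hx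
      have h3 := hCle x hx
      rw [key, he'] at h3
      exact (mul_le_mul_iff_right₀ hlampos).mp h3
    have hdd := setDim_inter_full (by omega : 1 ≤ d) hc hYfin hPconv hCconv
      (by rw [← hFY]; exact hFP) (by rw [← hFY]; exact hFC)
      (fun y hy => hFhyp y (hFY ▸ subset_convexHull ℝ Y hy)) hPle hCle'
      (by rw [← hFY]; exact hsF) hsP hsC
    rw [hPC] at hdd
    rw [hdd] at hsF
    omega
  · have hlamneg : lam < 0 := lt_of_le_of_ne (not_lt.mp hlampos) hlam0
    intro x hx
    have h3 := hCle x hx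
    rw [key, he'] at h3
    nlinarith
end Faces

namespace BSpec

variable {d b : ℕ} {S : Type}

theorem st_append (sp : BSpec d b S) (v : List (Fin b)) (j : Fin b) :
    sp.st (v ++ [j]) = sp.Sc (sp.st v) j := by
  simp [BSpec.st, List.foldl_append]

theorem Qfrom_append_col (sp : BSpec d b S) :
    ∀ (v : List (Fin b)) (s : S) (Q : Matrix (Fin d) (Fin (sp.n s)) ℝ) (j : Fin b)
      (i : ℕ) (h : i < sp.n ((v ++ [j]).foldl sp.Sc s)) (h' : i < sp.n (sp.Sc (v.foldl sp.Sc s) j)),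
      colFun (sp.Qfrom s (v ++ [j]) Q) ⟨i, h⟩ =
        ∑ l, sp.M (v.foldl sp.Sc s) j l ⟨i, h'⟩ • colFun (sp.Qfrom s v Q) l
  | [], s, Q, j, i, h, h' => by
      funext r
      simp [BSpec.Qfrom, colFun, Matrix.mul_apply, Finset.sum_apply, mul_comm]
      rfl
  | a :: v, s, Q, j, i, h, h' =>
      Qfrom_append_col sp v (sp.Sc s a) (Q * sp.M s a) j i h h'

theorem Qm_append_col (sp : BSpec d b S) (v : List (Fin b)) (j : Fin b) (i : ℕ)
    (h : i < sp.n (sp.st (v ++ [j]))) (h' : i < sp.n (sp.Sc (sp.st v) j)) :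
    colFun (sp.Qm (v ++ [j])) ⟨i, h⟩ =
      ∑ l, sp.M (sp.st v) j l ⟨i, h'⟩ • colFun (sp.Qm v) l :=
  sp.Qfrom_append_col v sp.sr sp.Qr j i h h'

theorem M_congr (sp : BSpec d b S) {s s' : S} (hss : s = s') (j : Fin b) (l k : ℕ)
    (hl : l < sp.n s) (hl' : l < sp.n s') (hk : k < sp.n (sp.Sc s j)) (hk' : k < sp.n (sp.Sc s' j)) :
    sp.M s j ⟨l, hl⟩ ⟨k, hk⟩ = sp.M s' j ⟨l, hl'⟩ ⟨k, hk'⟩ := by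
  subst hss; rfl

end BSpec

theorem affine_comb_map {d : ℕ} {ι : Type*} (τ : (Fin d → ℝ) ≃ᵃ[ℝ] (Fin d → ℝ)) (s : Finset ι)
    (w : ι → ℝ) (p : ι → Fin d → ℝ) (hw : ∑ i ∈ s, w i = 1) :
    τ (∑ i ∈ s, w i • p i) = ∑ i ∈ s, w i • τ (p i) := by
  have hτ : ∀ x : Fin d → ℝ, τ x = τ.linear x + τ 0 := by
    intro x
    have h0 := AffineMap.decomp (τ : (Fin d → ℝ) →ᵃ[ℝ] (Fin d → ℝ))
    have := congrFun h0 x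
    simpa using this
  rw [hτ, map_sum]
  have : ∀ i ∈ s, w i • τ (p i) = w i • (τ.linear (p i) : Fin d → ℝ) + w i • τ 0 := by
    intro i _
    rw [hτ, smul_add]
  rw [Finset.sum_congr rfl this, Finset.sum_add_distrib, ← Finset.sum_smul, hw, one_smul]
  congr 1
  apply Finset.sum_congr rfl
  intro i _
  rw [_root_.map_smul]

namespace BSpec
variable {d b : ℕ} {S : Type}

theorem SimBy_children (sp : BSpec d b S) {τ : (Fin d → ℝ) ≃ᵃ[ℝ] (Fin d → ℝ)}
    {v w : List (Fin b)} (hst : sp.st v = sp.st w)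
    (h : SimBy τ (sp.Qm v) (sp.Qm w)) (j : Fin b) :
    SimBy τ (sp.Qm (v ++ [j])) (sp.Qm (w ++ [j])) := by
  obtain ⟨hn, hcol⟩ := h
  have hstj : sp.st (v ++ [j]) = sp.st (w ++ [j]) := by
    rw [sp.st_append, sp.st_append, hst]
  refine ⟨by rw [hstj], ?_⟩
  intro i hi hi'
  have hiv : i < sp.n (sp.Sc (sp.st v) j) := by rw [← sp.st_append]; exact hi
  have hiw : i < sp.n (sp.Sc (sp.st w) j) := by rw [← sp.st_append]; exact hi'
  rw [sp.Qm_append_col v j i hi hiv, sp.Qm_append_col w j i hi' hiw]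
  have hsum1 : ∑ l : Fin (sp.n (sp.st v)), sp.M (sp.st v) j l ⟨i, hiv⟩ = 1 :=
    sp.M_trans (sp.st v) j ⟨i, hiv⟩
  rw [affine_comb_map τ _ _ _ hsum1]
  have he : sp.n (sp.st v) = sp.n (sp.st w) := by rw [hst]
  refine (Fintype.sum_equiv (finCongr he)
    (fun l => sp.M (sp.st v) j l ⟨i, hiv⟩ • τ (colFun (sp.Qm v) l))
    (fun l => sp.M (sp.st w) j l ⟨i, hiw⟩ • colFun (sp.Qm w) l) ?_).symm
  intro l
  have hMl : sp.M (sp.st v) j l ⟨i, hiv⟩ = sp.M (sp.st w) j (finCongr he l) ⟨i, hiw⟩ := by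
    have := sp.M_congr hst j l.1 i l.2 (he ▸ l.2) hiv hiw
    exact this
  have hcl : colFun (sp.Qm w) (finCongr he l) = τ (colFun (sp.Qm v) l) := by
    have := hcol l.1 l.2 (hn ▸ l.2)
    exact this
  rw [hMl, hcl]

end BSpec

theorem BSpec.core {d b : ℕ} {S : Type} (sp : BSpec d b S) (hd : 2 ≤ d) (hreg : sp.Regular)
    {a a' x x' x'' : List (Fin b)} {τ : (Fin d → ℝ) ≃ᵃ[ℝ] (Fin d → ℝ)} {I : Set ℕ}
    (hsa : SimBy τ (sp.Qm a) (sp.Qm a')) (hsx : SimBy τ (sp.Qm x) (sp.Qm x'))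
    (hax : sp.GeomNbr a x I) (hax'' : sp.GeomNbr a' x'' I)
    (hlen : x'.length = x''.length) : x' = x'' := by
  obtain ⟨⟨hP1, hP2⟩, hR1, hR2, hR3⟩ := hreg
  set P := convOf (sp.Qm a') with hP
  set P' := convOf (sp.Qm x') with hP'
  set P'' := convOf (sp.Qm x'') with hP''
  set Ya : Set (Fin d → ℝ) :=
    {y | ∃ i : Fin (sp.n (sp.st a')), (i : ℕ) ∈ I ∧ y = colFun (sp.Qm a') i} with hYa
  have hYfin : Ya.Finite := (Set.finite_range (colFun (sp.Qm a'))).subset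
    (by rintro y ⟨i, _, rfl⟩; exact ⟨i, rfl⟩)
  have hFs : facetOfIdx (sp.Qm a') I = convexHull ℝ Ya := rfl
  obtain ⟨hlena, hnea, hIa, hintera, hfaceta⟩ := hax
  obtain ⟨hlena', hnea', hIa', hintera', hfaceta'⟩ := hax''
  have himg : P ∩ P' = facetOfIdx (sp.Qm a') I := by
    rw [hP, hP', hsa.convOf_eq, hsx.convOf_eq, ← Set.image_inter τ.injective, hintera,
      ← hsa.facetOfIdx_eq I]
  have himg'' : P ∩ P'' = facetOfIdx (sp.Qm a') I := hintera'
  have hfacP' : IsFacet P' (facetOfIdx (sp.Qm a') I) := by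
    have h1 := hfaceta.image τ
    rw [Set.image_inter τ.injective, ← hsa.convOf_eq, ← hsx.convOf_eq, himg] at h1
    exact h1
  have hfacP'' : IsFacet P'' (facetOfIdx (sp.Qm a') I) := by
    rw [himg''] at hfaceta'
    exact hfaceta'
  obtain ⟨F₀, hF₀facet, hIdef⟩ := hIa'
  obtain ⟨⟨c, c₀, hPle, hF₀eq⟩, hF₀dim⟩ := hF₀facet
  have hsPd : setDim P = (d : ℤ) := hP2 a'
  have hsP'd : setDim P' = (d : ℤ) := hP2 x'
  have hsP''d : setDim P'' = (d : ℤ) := hP2 x''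
  have hc : c ≠ 0 := face_c_ne_zero hd hF₀eq hsPd (by rw [hF₀dim, hsPd])
  have hsF : setDim (facetOfIdx (sp.Qm a') I) = (d : ℤ) - 1 := by
    have h2 := hfacP''.2
    rwa [hsP''d] at h2
  have hYhyp : ∀ y ∈ Ya, c ⬝ᵥ y = c₀ := by
    rintro y ⟨i, hiI, rfl⟩
    have hmem1 : (i : ℕ) ∈ {i : ℕ | ∃ h : i < sp.n (sp.st a'), colFun (sp.Qm a') ⟨i, h⟩ ∈ F₀} :=
      hIdef ▸ hiI
    obtain ⟨h, hmem⟩ := hmem1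
    have hmem2 : colFun (sp.Qm a') i ∈ F₀ := by simpa [Fin.eta] using hmem
    exact (hF₀eq ▸ hmem2).2
  have hFhyp : ∀ z ∈ facetOfIdx (sp.Qm a') I, c ⬝ᵥ z = c₀ := by
    rw [hFs]
    exact fun z hz => convexHull_min hYhyp (convex_dp_eq c c₀) hz
  have hside' : ∀ z ∈ P', c₀ ≤ c ⬝ᵥ z :=
    side_of_facet hd hYfin hFs hc (convex_convexHull ℝ _) (convex_convexHull ℝ _)
      hPle hFhyp himg hfacP' hsPd hsP'd hsF
  have hside'' : ∀ z ∈ P'', c₀ ≤ c ⬝ᵥ z :=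
    side_of_facet hd hYfin hFs hc (convex_convexHull ℝ _) (convex_convexHull ℝ _)
      hPle hFhyp himg'' hfacP'' hsPd hsP''d hsF
  have hFP' : convexHull ℝ Ya ⊆ P' := by rw [← hFs, ← himg]; exact Set.inter_subset_right
  have hFP'' : convexHull ℝ Ya ⊆ P'' := by rw [← hFs, ← himg'']; exact Set.inter_subset_right
  have hYhyp' : ∀ y ∈ Ya, (-c) ⬝ᵥ y = -c₀ := fun y hy => by
    rw [neg_dotProduct, hYhyp y hy]
  have hle' : ∀ z ∈ P', (-c) ⬝ᵥ z ≤ -c₀ := fun z hz => by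
    rw [neg_dotProduct]; linarith [hside' z hz]
  have hle'' : ∀ z ∈ P'', (-c) ⬝ᵥ z ≤ -c₀ := fun z hz => by
    rw [neg_dotProduct]; linarith [hside'' z hz]
  have hdim := setDim_inter_full (by omega : 1 ≤ d) (neg_ne_zero.mpr hc) hYfin
      (convex_convexHull ℝ _) (convex_convexHull ℝ _) hFP' hFP'' hYhyp' hle' hle''
      (by rw [← hFs]; exact hsF) hsP'd hsP''d
  exact (hR3 x' x'' hlen).1 hdim

theorem facetOfIdx_subset_face {d m : ℕ} {Q : Matrix (Fin d) (Fin m) ℝ}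
    {G : Set (Fin d → ℝ)} {J : Set ℕ}
    (hG : IsFace (convOf Q) G) (hJ : J = {i : ℕ | ∃ h : i < m, colFun Q ⟨i, h⟩ ∈ G}) :
    facetOfIdx Q J ⊆ G := by
  have hGconv : Convex ℝ G := hG.convex (convex_convexHull ℝ _)
  apply convexHull_min _ hGconv
  rintro y ⟨i, hiJ, rfl⟩
  rw [hJ] at hiJ
  obtain ⟨h, hmem⟩ := hiJ
  simpa [Fin.eta] using hmem

theorem lookup_functions_well_defined {d b : ℕ} (hd : 2 ≤ d) (hb : 2 ≤ b)
    {S : Type} [Finite S] (sp : BSpec d b S) (hreg : sp.Regular) :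
    -- (a) well-definedness of N
    (∀ (v w : List (Fin b)) (j j' j'' : Fin b) (I : Set ℕ),
      sp.st v = sp.st w →
      I ∈ idxFacets (sp.Qm (v ++ [j])) →
      sp.GeomNbr (v ++ [j]) (v ++ [j']) I →
      sp.GeomNbr (w ++ [j]) (w ++ [j'']) I →
      j' = j'') ∧
    -- (b) well-definedness of F^p and Ω
    (∀ (v v' w w' : List (Fin b)) (J₁ J₂ I : Set ℕ) (j j' j'' : Fin b),
      sp.st v = sp.st w →
      sp.GeomNbr v v' J₁ →
      sp.GeomNbr w w' J₂ →
      sp.GeomNbr (v ++ [j]) (v' ++ [j']) I →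
      sp.GeomNbr (w ++ [j]) (w' ++ [j'']) I →
      J₁ = J₂ ∧ (sp.st v' = sp.st w' → j' = j'')) := by
  constructor
  · intro v w j j' j'' I hst hI h1 h2
    obtain ⟨τ, hτ⟩ := hreg.1.1 v w hst
    have hτj := sp.SimBy_children hst hτ j
    have hτj' := sp.SimBy_children hst hτ j'
    have heq := sp.core hd hreg hτj hτj' h1 h2 (by simp)
    have h3 := List.append_cancel_left heq
    simpa using h3
  · intro v v' w w' J₁ J₂ I j j' j'' hst hvv' hww' h1 h2
    obtain ⟨τ, hτ⟩ := hreg.1.1 v w hst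
    have hτj := sp.SimBy_children hst hτ j
    have step1 : facetOfIdx (sp.Qm (v ++ [j])) I ⊆ facetOfIdx (sp.Qm v) J₁ := by
      rw [← h1.2.2.2.1, ← hvv'.2.2.2.1]
      exact Set.inter_subset_inter (hreg.2.2.1 v j) (hreg.2.2.1 v' j')
    have step2 : facetOfIdx (sp.Qm (w ++ [j])) I ⊆ facetOfIdx (sp.Qm w) J₁ := by
      rw [hτj.facetOfIdx_eq I, hτ.facetOfIdx_eq J₁]
      exact Set.image_mono step1
    have step3 : facetOfIdx (sp.Qm (w ++ [j])) I ⊆ facetOfIdx (sp.Qm w) J₂ := by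
      rw [← h2.2.2.2.1, ← hww'.2.2.2.1]
      exact Set.inter_subset_inter (hreg.2.2.1 w j) (hreg.2.2.1 w' j'')
    have step4 : setDim (facetOfIdx (sp.Qm (w ++ [j])) I) = (d : ℤ) - 1 := by
      have h4 := h2.2.2.2.2.2
      rw [h2.2.2.2.1] at h4
      rw [hreg.1.2 (w' ++ [j''])] at h4
      exact h4
    obtain ⟨G₁, hG₁, hJ₁def⟩ := hτ.idxFacets_mem hvv'.2.2.1
    obtain ⟨G₂, hG₂, hJ₂def⟩ := hww'.2.2.1
    have hsub₁ : facetOfIdx (sp.Qm w) J₁ ⊆ G₁ := facetOfIdx_subset_face hG₁.1 hJ₁def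
    have hsub₂ : facetOfIdx (sp.Qm w) J₂ ⊆ G₂ := facetOfIdx_subset_face hG₂.1 hJ₂def
    have hGeq : G₁ = G₂ :=
      facet_unique hd hG₁ hG₂ (hreg.1.2 w)
        (fun z hz => hsub₁ (step2 hz)) (fun z hz => hsub₂ (step3 hz)) step4
    have hJJ : J₁ = J₂ := by rw [hJ₁def, hJ₂def, hGeq]
    refine ⟨hJJ, ?_⟩
    intro hst'
    have hww'J₁ : sp.GeomNbr w w' J₁ := by rw [hJJ]; exact hww'
    obtain ⟨τ₂, hτ₂v, hτ₂v'⟩ := hreg.2.1 v v' w w' J₁ hvv' hww'J₁ hst hst'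
    have ha := sp.SimBy_children hst hτ₂v j
    have hb := sp.SimBy_children hst' hτ₂v' j'
    have heq := sp.core hd hreg ha hb h1 h2 (by simp)
    simpa using List.append_cancel_left heq
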